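/- The monic reduced Mittag-Leffler polynomials satisfy Σ_{k=0}^{n} [φ̂_k''(x) φ̂_{n-k}(x) - φ̂_k'(x) φ̂_{n-k}'(x)] / (k!(n-k)!) = 0 for every n ≥ 1 and all real x. -/

import Mathlib

open Polynomial

section MRMLaux
open Finset

private lemma chooseId (m k : ℕ) (hk : k < m) :
    m.choose k * ((m - k) * (m - k + 1)) + m.choose (k+1) * ((k+1) * (k+2))
      = m * (m + 3) * (m-1).choose k := by
  have h1 : m.choose (k+1) * (k+1) = m.choose k * (m - k) := Nat.choose_succ_right_eq m k
  have h2 : m * (m-1).choose k = m.choose (k+1) * (k+1) := by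
    have h := Nat.add_one_mul_choose_eq (m-1) k
    rw [Nat.sub_add_cancel (by omega)] at h
    exact h
  have e1 : m.choose k * ((m - k) * (m - k + 1))
      = (m.choose (k+1) * (k+1)) * (m - k + 1) := by rw [h1]; ring
  have e2 : (m - k + 1) + (k + 2) = m + 3 := by omega
  calc m.choose k * ((m - k) * (m - k + 1)) + m.choose (k+1) * ((k+1) * (k+2))
      = (m.choose (k+1) * (k+1)) * ((m - k + 1) + (k + 2)) := by rw [e1]; ring
    _ = (m * (m-1).choose k) * (m+3) := by rw [← h2, e2]
    _ = m * (m + 3) * (m-1).choose k := by ring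


private lemma keyGen (x : ℝ) (P G H c : ℕ → ℝ)
    (hc : ∀ n : ℕ, c n = (n : ℝ) * ((n : ℝ) + 1) / 4)
    (hG0 : G 0 = 0) (hH0 : H 0 = 0)
    (hP : ∀ n : ℕ, P (n+1) = x * P n - c n * P (n-1))
    (hG : ∀ n : ℕ, G (n+1) = P n + x * G n - c n * G (n-1))
    (hH : ∀ n : ℕ, H (n+1) = 2 * G n + x * H n - c n * H (n-1)) :
    ∀ n : ℕ, ∑ k ∈ Finset.range (n+1),
      (n.choose k : ℝ) * (H k * P (n-k) - G k * G (n-k)) = 0 := by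
  have hc0 : c 0 = 0 := by rw [hc]; norm_num
  set D : ℕ → ℕ → ℝ := fun k j => H k * P j - G k * G j with hD
  set W : ℕ → ℝ := fun n => ∑ k ∈ Finset.range (n+1),
      (n.choose k : ℝ) * D k (n-k) with hW
  -- antisymmetry
  have hAnti : ∀ m : ℕ, ∑ k ∈ Finset.range (m+1), (m.choose k : ℝ) * (G k * P (m-k))
      = ∑ k ∈ Finset.range (m+1), (m.choose k : ℝ) * (P k * G (m-k)) := by
    intro m
    have := Finset.sum_range_reflect
      (fun k => (m.choose k : ℝ) * (G k * P (m-k))) (m+1)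
    rw [← this]
    apply Finset.sum_congr rfl
    intro k hk
    have hk' : k ≤ m := by simpa using Nat.lt_succ_iff.mp (Finset.mem_range.mp hk)
    have e1 : m + 1 - 1 - k = m - k := by omega
    have e2 : m - (m - k) = k := by omega
    rw [e1, e2, Nat.choose_symm hk']; ring
  -- Pascal split
  have hSplit : ∀ m : ℕ, W (m+1)
      = (∑ k ∈ Finset.range (m+1), (m.choose k : ℝ) * D k (m+1-k))
      + ∑ k ∈ Finset.range (m+1), (m.choose k : ℝ) * D (k+1) (m-k) := by
    intro m
    have e1 : W (m+1) = ∑ k ∈ Finset.range (m+1),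
        (((m+1).choose (k+1) : ℝ)) * D (k+1) (m-k) + D 0 (m+1) := by
      show ∑ k ∈ Finset.range (m+1+1), (((m+1).choose k : ℝ)) * D k (m+1-k) = _
      rw [Finset.sum_range_succ' (fun k => (((m+1).choose k : ℝ)) * D k (m+1-k)) (m+1)]
      simp
    have e2 : ∑ k ∈ Finset.range (m+1), (((m+1).choose (k+1) : ℝ)) * D (k+1) (m-k)
        = ∑ k ∈ Finset.range (m+1), (m.choose k : ℝ) * D (k+1) (m-k)
          + ∑ k ∈ Finset.range (m+1), (m.choose (k+1) : ℝ) * D (k+1) (m-k) := by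
      rw [← Finset.sum_add_distrib]
      apply Finset.sum_congr rfl; intro k _
      rw [Nat.choose_succ_succ]; push_cast; ring
    have h4 := Finset.sum_range_succ' (fun k => ((m.choose k : ℝ)) * D k (m+1-k)) (m+1)
    have h5 := Finset.sum_range_succ (fun k => ((m.choose k : ℝ)) * D k (m+1-k)) (m+1)
    simp only [Nat.succ_sub_succ, Nat.choose_zero_right, Nat.cast_one, one_mul,
      Nat.choose_succ_self, Nat.cast_zero, zero_mul, add_zero, Nat.sub_zero] at h4 h5
    rw [e1, e2]
    rw [h5] at h4
    linarith [h4]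
  -- main two-term recurrence
  have hRec : ∀ m : ℕ, 1 ≤ m →
      W (m+1) = 2*x*(W m) - ((m:ℝ)*((m:ℝ)+3)/4) * W (m-1) := by
    intro m hm
    have hWm : W m = ∑ k ∈ Finset.range (m+1), (m.choose k : ℝ) * D k (m-k) := by
      simp only [hW]
    have hA : ∑ k ∈ Finset.range (m+1), (m.choose k : ℝ) * D k (m+1-k)
        = x * (∑ k ∈ Finset.range (m+1), (m.choose k : ℝ) * D k (m-k))
          - ∑ k ∈ Finset.range (m+1), (m.choose k : ℝ) * (G k * P (m-k))
          - ∑ k ∈ Finset.range (m+1), (m.choose k : ℝ) * (c (m-k) * D k (m-k-1)) := by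
      have step : ∀ k ∈ Finset.range (m+1),
          (m.choose k : ℝ) * D k (m+1-k)
          = x * ((m.choose k : ℝ) * D k (m-k))
            - (m.choose k : ℝ) * (G k * P (m-k))
            - (m.choose k : ℝ) * (c (m-k) * D k (m-k-1)) := by
        intro k hk
        have e : m + 1 - k = (m - k) + 1 := by
          have := Nat.lt_succ_iff.mp (Finset.mem_range.mp hk); omega
        rw [e]
        simp only [hD]
        rw [hP (m-k), hG (m-k)]
        ring
      rw [Finset.sum_congr rfl step, Finset.sum_sub_distrib, Finset.sum_sub_distrib,
        ← Finset.mul_sum]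
    have hB : ∑ k ∈ Finset.range (m+1), (m.choose k : ℝ) * D (k+1) (m-k)
        = x * (∑ k ∈ Finset.range (m+1), (m.choose k : ℝ) * D k (m-k))
          + 2 * ∑ k ∈ Finset.range (m+1), (m.choose k : ℝ) * (G k * P (m-k))
          - ∑ k ∈ Finset.range (m+1), (m.choose k : ℝ) * (P k * G (m-k))
          - ∑ k ∈ Finset.range (m+1), (m.choose k : ℝ) * (c k * D (k-1) (m-k)) := by
      have step : ∀ k ∈ Finset.range (m+1),
          (m.choose k : ℝ) * D (k+1) (m-k)
          = x * ((m.choose k : ℝ) * D k (m-k))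
            + 2 * ((m.choose k : ℝ) * (G k * P (m-k)))
            - (m.choose k : ℝ) * (P k * G (m-k))
            - (m.choose k : ℝ) * (c k * D (k-1) (m-k)) := by
        intro k hk
        simp only [hD]
        rw [hH k, hG k]
        ring
      rw [Finset.sum_congr rfl step, Finset.sum_sub_distrib, Finset.sum_sub_distrib,
        Finset.sum_add_distrib, ← Finset.mul_sum, ← Finset.mul_sum]
    have hS1 : ∑ k ∈ Finset.range (m+1), (m.choose k : ℝ) * (c (m-k) * D k (m-k-1))
        = ∑ k ∈ Finset.range m, (m.choose k : ℝ) * (c (m-k) * D k (m-1-k)) := by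
      rw [Finset.sum_range_succ]
      rw [Nat.sub_self, hc0]
      simp only [zero_mul, mul_zero, add_zero]
      apply Finset.sum_congr rfl
      intro k hk
      have : m - k - 1 = m - 1 - k := by omega
      rw [this]
    have hS2 : ∑ k ∈ Finset.range (m+1), (m.choose k : ℝ) * (c k * D (k-1) (m-k))
        = ∑ k ∈ Finset.range m, (m.choose (k+1) : ℝ) * (c (k+1) * D k (m-1-k)) := by
      rw [Finset.sum_range_succ' (fun k => (m.choose k : ℝ) * (c k * D (k-1) (m-k))) m]
      rw [hc0]
      simp only [zero_mul, mul_zero, add_zero]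
      apply Finset.sum_congr rfl
      intro k hk
      have e1 : k + 1 - 1 = k := by omega
      have e2 : m - (k+1) = m - 1 - k := by omega
      rw [e1, e2]
    have hS12 : (∑ k ∈ Finset.range m, (m.choose k : ℝ) * (c (m-k) * D k (m-1-k)))
        + ∑ k ∈ Finset.range m, (m.choose (k+1) : ℝ) * (c (k+1) * D k (m-1-k))
        = ((m:ℝ)*((m:ℝ)+3)/4) * W (m-1) := by
      have hWm1 : W (m-1) = ∑ k ∈ Finset.range m, ((m-1).choose k : ℝ) * D k (m-1-k) := by
        simp only [hW]
        rw [Nat.sub_add_cancel hm]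
      rw [hWm1, Finset.mul_sum, ← Finset.sum_add_distrib]
      apply Finset.sum_congr rfl
      intro k hk
      have hk' : k < m := Finset.mem_range.mp hk
      have hnat := chooseId m k hk'
      have hcast : (m.choose k : ℝ) * (((m-k : ℕ):ℝ) * (((m-k : ℕ):ℝ) + 1))
            + (m.choose (k+1) : ℝ) * (((k:ℝ)+1) * ((k:ℝ)+2))
          = (m:ℝ) * ((m:ℝ) + 3) * (((m-1).choose k : ℕ) : ℝ) := by
        exact_mod_cast congrArg (Nat.cast : ℕ → ℝ) hnat
      have hco : (m.choose k : ℝ) * c (m-k) + (m.choose (k+1) : ℝ) * c (k+1)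
          = (m:ℝ)*((m:ℝ)+3)/4 * ((m-1).choose k : ℝ) := by
        rw [hc, hc]
        push_cast
        linarith [hcast]
      calc (m.choose k : ℝ) * (c (m-k) * D k (m-1-k))
            + (m.choose (k+1) : ℝ) * (c (k+1) * D k (m-1-k))
          = ((m.choose k : ℝ) * c (m-k) + (m.choose (k+1) : ℝ) * c (k+1)) * D k (m-1-k) := by
            ring
        _ = (m:ℝ)*((m:ℝ)+3)/4 * (((m-1).choose k : ℝ) * D k (m-1-k)) := by rw [hco]; ring
    rw [hSplit m, hA, hB, hWm]
    rw [hS1, hS2] at *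
    linarith [hAnti m, hS12]
  -- base cases
  have base0 : W 0 = 0 := by
    simp only [hW]
    simp [hD, hG0, hH0]
  have base1 : W 1 = 0 := by
    have h1 := hH 0
    simp only [hG0, hH0, hc0] at h1
    norm_num at h1
    simp only [hW]
    rw [Finset.sum_range_succ, Finset.sum_range_succ, Finset.sum_range_zero]
    simp [hD, hG0, hH0, h1]
  -- induction
  have main : ∀ n, W n = 0 ∧ W (n+1) = 0 := by
    intro n
    induction n with
    | zero => exact ⟨base0, base1⟩
    | succ n ih =>
      refine ⟨ih.2, ?_⟩
      have h2 := hRec (n+1) (Nat.le_add_left 1 n)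
      simp only [Nat.add_sub_cancel] at h2
      rw [ih.1, ih.2] at h2
      simpa using h2
  intro n
  have := (main n).1
  simpa [hW, hD] using this
end MRMLaux

/-- The recurrence-differential relation
`Σ_{k=0}^n [φ̂_k'' φ̂_{n-k} - φ̂_k' φ̂_{n-k}'] / (k!(n-k)!) = 0`. -/
theorem monicReducedMittagLeffler_convolution (f : ℕ → Polynomial ℝ)
    (h0 : f 0 = 1) (h1 : f 1 = X)
    (hrec : ∀ n : ℕ, 1 ≤ n →
      f (n + 1) = X * f n - C ((n : ℝ) * ((n : ℝ) + 1) / 4) * f (n - 1)) :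
    ∀ n : ℕ, 1 ≤ n → ∀ x : ℝ,
      ∑ k ∈ Finset.range (n + 1),
        ((derivative (derivative (f k))).eval x * (f (n - k)).eval x
          - (derivative (f k)).eval x * (derivative (f (n - k))).eval x)
          / ((Nat.factorial k) * (Nat.factorial (n - k))) = 0 := by
  intro n hn x
  have hrec' : ∀ m : ℕ, f (m+1) = X * f m - C ((m : ℝ) * ((m : ℝ) + 1) / 4) * f (m-1) := by
    intro m
    rcases Nat.eq_zero_or_pos m with hm | hm
    · subst hm; simp [h0, h1]
    · exact hrec m hm
  have hd1 : ∀ m : ℕ, derivative (f (m+1))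
      = f m + X * derivative (f m)
        - C ((m : ℝ) * ((m : ℝ) + 1) / 4) * derivative (f (m-1)) := by
    intro m
    rw [hrec' m]
    simp [derivative_mul]
    try ring
  have hd2 : ∀ m : ℕ, derivative (derivative (f (m+1)))
      = 2 * derivative (f m) + X * derivative (derivative (f m))
        - C ((m : ℝ) * ((m : ℝ) + 1) / 4) * derivative (derivative (f (m-1))) := by
    intro m
    rw [hd1 m]
    simp [derivative_mul]
    try ring
  have key : ∑ k ∈ Finset.range (n+1), (n.choose k : ℝ) *
      ((derivative (derivative (f k))).eval x * (f (n-k)).eval x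
        - (derivative (f k)).eval x * (derivative (f (n-k))).eval x) = 0 :=
    keyGen x (fun k => (f k).eval x) (fun k => (derivative (f k)).eval x)
      (fun k => (derivative (derivative (f k))).eval x)
      (fun m => (m : ℝ) * ((m : ℝ) + 1) / 4) (fun _ => rfl)
      (by simp [h0]) (by simp [h0])
      (fun m => by beta_reduce; rw [hrec' m]; simp)
      (fun m => by beta_reduce; rw [hd1 m]; simp)
      (fun m => by beta_reduce; rw [hd2 m]; simp) n
  have conv : ∀ k ∈ Finset.range (n+1),
      ((derivative (derivative (f k))).eval x * (f (n - k)).eval x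
        - (derivative (f k)).eval x * (derivative (f (n - k))).eval x)
        / ((Nat.factorial k) * (Nat.factorial (n - k)))
      = ((n.choose k : ℝ) * ((derivative (derivative (f k))).eval x * (f (n-k)).eval x
          - (derivative (f k)).eval x * (derivative (f (n-k))).eval x))
          / (Nat.factorial n) := by
    intro k hk
    have hk' : k ≤ n := Nat.lt_succ_iff.mp (Finset.mem_range.mp hk)
    have e1 : ((Nat.factorial k : ℝ)) ≠ 0 := Nat.cast_ne_zero.mpr (Nat.factorial_ne_zero k)
    have e2 : ((Nat.factorial (n-k) : ℝ)) ≠ 0 := Nat.cast_ne_zero.mpr (Nat.factorial_ne_zero (n-k))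
    have e3 : ((Nat.factorial n : ℝ)) ≠ 0 := Nat.cast_ne_zero.mpr (Nat.factorial_ne_zero n)
    rw [Nat.cast_choose ℝ hk']
    field_simp
  rw [Finset.sum_congr rfl conv, ← Finset.sum_div, key, zero_div]
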